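/- Let 𝒟 and 𝒞 be categories, G : 𝒞 ⥤ 𝒟 a functor, 𝒳 = Comma (𝟭 𝒟) G the comma category with objects (F, E, α : F ⟶ G(E)), π : 𝒳 ⥤ 𝒞 the second projection, and τ : 𝒞 ⥤ 𝒳 the functor sending E to (G(E), E, 𝟙_{G(E)}) and h : E ⟶ E' to (G(h), h). Then: (a) π is left adjoint to τ; and (b) if moreover G has a right adjoint R with adjunction unit μ : 𝟭_𝒞 ⟶ G ⋙ R and 𝒞 has pullbacks, then τ has a right adjoint which sends an object (F, E, α : F ⟶ G(E)) of 𝒳 to the pullback in 𝒞 of R(α) : R(F) ⟶ R(G(E)) along μ_E : E ⟶ R(G(E)). -/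

import Mathlib

open CategoryTheory Limits

/-- The functor `τ : 𝒞 ⥤ Comma (𝟭 𝒟) G` sending `E` to `(G(E), E, 𝟙_{G(E)})`. -/
def tauFunctor {D : Type*} [Category D] {C : Type*} [Category C] (G : C ⥤ D) :
    C ⥤ Comma (𝟭 D) G where
  obj E := { left := G.obj E, right := E, hom := 𝟙 (G.obj E) }
  map h := { left := G.map h, right := h }

section Aux

variable {D : Type*} [Category D] {C : Type*} [Category C] (G : C ⥤ D)
  (R : D ⥤ C) (adj : G ⊣ R) [HasPullbacks C]

/-- (a): `π ⊣ τ`. -/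
noncomputable def sndAdjTau : Comma.snd (𝟭 D) G ⊣ tauFunctor G :=
  Adjunction.mkOfHomEquiv
    { homEquiv := fun X E =>
        { toFun := fun h => { left := X.hom ≫ G.map h, right := h, w := by simp [tauFunctor] }
          invFun := fun f => f.right
          left_inv := fun h => rfl
          right_inv := fun f => by
            have := f.w
            simp only [tauFunctor, Functor.id_map, Category.comp_id] at this
            ext
            · exact ((Category.comp_id _).symm.trans this).symm
            · rfl }
      homEquiv_naturality_left_symm := fun f g => rfl
      homEquiv_naturality_right := fun f g => by
        ext
        · show _ ≫ G.map (f ≫ g) = (_ ≫ G.map f) ≫ G.map g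
          simp
        · rfl }

noncomputable def tauEquiv (E : C) (X : Comma (𝟭 D) G) :
    ((tauFunctor G).obj E ⟶ X) ≃ (E ⟶ pullback (R.map X.hom) (adj.unit.app X.right)) where
  toFun f := pullback.lift (adj.homEquiv E X.left f.left) f.right (by
    have hw : f.left ≫ X.hom = G.map f.right := by
      have := f.w; simpa [tauFunctor] using this
    erw [← Adjunction.homEquiv_naturality_right, hw, Adjunction.homEquiv_unit]
    simp
    exact (adj.unit.naturality f.right).symm)
  invFun p :=
    { left := (adj.homEquiv E X.left).symm (p ≫ pullback.fst _ _)
      right := p ≫ pullback.snd _ _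
      w := by
        simp only [tauFunctor, Functor.id_map, Functor.id_obj, Category.id_comp]
        apply (adj.homEquiv E (G.obj X.right)).injective
        rw [Adjunction.homEquiv_naturality_right, Equiv.apply_symm_apply,
          Adjunction.homEquiv_unit]
        simp [pullback.condition] }
  left_inv f := by
    dsimp only
    ext
    · show (adj.homEquiv E X.left).symm (pullback.lift _ _ _ ≫ pullback.fst _ _) = f.left
      erw [pullback.lift_fst, Equiv.symm_apply_apply]
    · show pullback.lift _ _ _ ≫ pullback.snd _ _ = f.right
      exact pullback.lift_snd _ _ _
  right_inv p := by
    dsimp only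
    apply pullback.hom_ext
    · erw [pullback.lift_fst, Equiv.apply_symm_apply]
    · erw [pullback.lift_snd]
      rfl

/-- (b): `τ` has a right adjoint. -/
noncomputable def tauAdj :
    tauFunctor G ⊣ Adjunction.rightAdjointOfEquiv (tauEquiv G R adj) (by
      intro X' X Y f g
      apply pullback.hom_ext
      · show pullback.lift (adj.homEquiv X' Y.left ((tauFunctor G).map f ≫ g).left) _ _ ≫ _ =
          (f ≫ pullback.lift (adj.homEquiv X Y.left g.left) g.right _) ≫ _
        erw [Category.assoc, pullback.lift_fst, pullback.lift_fst]
        exact adj.homEquiv_naturality_left f g.left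
      · show pullback.lift (adj.homEquiv X' Y.left ((tauFunctor G).map f ≫ g).left) _ _ ≫ _ =
          (f ≫ pullback.lift (adj.homEquiv X Y.left g.left) g.right _) ≫ _
        erw [Category.assoc, pullback.lift_snd, pullback.lift_snd]
        rfl) :=
  Adjunction.adjunctionOfEquivRight _ _

end Aux

/-- (a) The second projection `π : Comma (𝟭 𝒟) G ⥤ 𝒞` is left adjoint to `τ`; (b) if `G`
has a right adjoint `R` with unit `μ` and `𝒞` has pullbacks, then `τ` has a right adjoint
sending `(F, E, α)` to the pullback of `R(α)` along `μ_E`. -/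
theorem comma_snd_adjoint_and_tau_right_adjoint
    {D : Type*} [Category D] {C : Type*} [Category C] (G : C ⥤ D)
    (R : D ⥤ C) (adj : G ⊣ R) [HasPullbacks C] :
    Nonempty (Comma.snd (𝟭 D) G ⊣ tauFunctor G) ∧
      ∃ ρ : Comma (𝟭 D) G ⥤ C,
        Nonempty (tauFunctor G ⊣ ρ) ∧
          ∀ X : Comma (𝟭 D) G,
            Nonempty (ρ.obj X ≅ pullback (R.map X.hom) (adj.unit.app X.right)) :=
  ⟨⟨sndAdjTau G⟩, _, ⟨tauAdj G R adj⟩, fun X => ⟨Iso.refl _⟩⟩
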